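/- Let m ≥ 2 be an integer, q ≥ 1/m, and h ∈ C^m(ℝ) with ‖h‖_{L^∞(ℝ)} and ‖h^{(m)}‖_{L^∞(ℝ)} finite. Then there exists a constant L_m, depending only on q, m, ‖h‖_{L^∞(ℝ)} and ‖h^{(m)}‖_{L^∞(ℝ)}, such that for all r ∈ ℝ, |h(r)|^q ≤ L_m ∫_{Ω_r} |h(ξ)|^{q − 1/m} dξ, where Ω_r = [r, r+2] if r ≥ 0 and Ω_r = [r−2, r] if r < 0. -/

import Mathlib

open MeasureTheory Finset

/-- Iterated forward differences are controlled by the corresponding derivative bound. -/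
lemma fwdDiff_iter_abs_le (t : ℝ) (ht : 0 ≤ t) :
    ∀ (n : ℕ) (f : ℝ → ℝ) (M : ℝ), ContDiff ℝ (n : ℕ∞) f →
      (∀ x, |iteratedDeriv n f x| ≤ M) → ∀ x, |(fwdDiff t)^[n] f x| ≤ M * t ^ n := by
  intro n
  induction n with
  | zero =>
    intro f M _ hM x
    simpa using hM x
  | succ n IH =>
    intro f M hf hM x
    have hfn : ContDiff ℝ (n : ℕ∞) f := hf.of_le (by exact_mod_cast Nat.le_succ n)
    have hshift : ContDiff ℝ (n : ℕ∞) (fun y => f (y + t)) :=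
      hfn.comp (contDiff_id.add contDiff_const)
    have hg : ContDiff ℝ (n : ℕ∞) (fwdDiff t f) := by
      have : fwdDiff t f = fun y => f (y + t) - f y := rfl
      rw [this]
      exact hshift.sub hfn
    -- derivative bound for the difference
    have hdiff : Differentiable ℝ (iteratedDeriv n f) :=
      hf.differentiable_iteratedDeriv n (by exact_mod_cast Nat.lt_succ_self n)
    have hMVT : ∀ y : ℝ, |iteratedDeriv n f (y + t) - iteratedDeriv n f y| ≤ M * t := by
      intro y
      have hconv : Convex ℝ (Set.univ : Set ℝ) := convex_univ
      have hder : ∀ z ∈ (Set.univ : Set ℝ), DifferentiableAt ℝ (iteratedDeriv n f) z :=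
        fun z _ => hdiff z
      have hbd : ∀ z ∈ (Set.univ : Set ℝ), ‖deriv (iteratedDeriv n f) z‖ ≤ M := by
        intro z _
        rw [Real.norm_eq_abs, ← iteratedDeriv_succ]
        exact hM z
      have := hconv.norm_image_sub_le_of_norm_deriv_le hder hbd (Set.mem_univ y)
        (Set.mem_univ (y + t))
      simpa [Real.norm_eq_abs, abs_of_nonneg ht] using this
    have hgM : ∀ y, |iteratedDeriv n (fwdDiff t f) y| ≤ M * t := by
      intro y
      have heq : iteratedDeriv n (fwdDiff t f) y
          = iteratedDeriv n (fun z => f (z + t)) y - iteratedDeriv n f y := by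
        have : fwdDiff t f = fun z => f (z + t) - f z := rfl
        rw [this]
        simp only [← iteratedDerivWithin_univ]
        have := iteratedDerivWithin_sub (Set.mem_univ y) uniqueDiffOn_univ
          (((contDiffOn_univ.mpr hshift) : ContDiffOn ℝ (n : ℕ∞) (fun z => f (z + t)) Set.univ) y (Set.mem_univ y))
          (((contDiffOn_univ.mpr hfn) : ContDiffOn ℝ (n : ℕ∞) f Set.univ) y (Set.mem_univ y))
        simpa [Pi.sub_def] using this
      rw [heq, iteratedDeriv_comp_add_const]
      exact hMVT y
    have := IH (fwdDiff t f) (M * t) hg hgM x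
    calc |(fwdDiff t)^[n+1] f x| = |(fwdDiff t)^[n] (fwdDiff t f) x| := by
          rw [Function.iterate_succ_apply]
      _ ≤ M * t * t ^ n := this
      _ = M * t ^ (n + 1) := by ring

lemma abs_le_fwd (m : ℕ) (f : ℝ → ℝ) (t : ℝ) (r : ℝ) :
    |f r| ≤ |(fwdDiff t)^[m] f r|
      + ∑ k ∈ Finset.range m, (m.choose (k+1) : ℝ) * |f (r + (k+1) * t)| := by
  have hFD := fwdDiff_iter_eq_sum_shift t f m r
  rw [Finset.sum_range_succ'] at hFD
  set S : ℝ := ∑ k ∈ Finset.range m,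
      ((-1 : ℤ) ^ (m - (k+1)) * (m.choose (k+1) : ℤ)) • f (r + (k+1) • t) with hS
  have hc0 : ((-1 : ℤ) ^ (m - 0) * (m.choose 0 : ℤ)) • f (r + (0:ℕ) • t)
      = (fwdDiff t)^[m] f r - S := by rw [hFD]; ring
  have habs0 : |((-1 : ℤ) ^ (m - 0) * (m.choose 0 : ℤ)) • f (r + (0:ℕ) • t)| = |f r| := by
    rw [zsmul_eq_mul, abs_mul]
    push_cast
    simp [abs_pow]
  have hSabs : |S| ≤ ∑ k ∈ Finset.range m, (m.choose (k+1) : ℝ) * |f (r + (k+1) * t)| := by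
    refine (Finset.abs_sum_le_sum_abs _ _).trans ?_
    refine Finset.sum_le_sum fun k _ => ?_
    rw [zsmul_eq_mul, abs_mul]
    have h1 : |(((-1 : ℤ) ^ (m - (k+1)) * (m.choose (k+1) : ℤ)) : ℝ)| = (m.choose (k+1) : ℝ) := by
      push_cast
      rw [abs_mul, abs_pow]
      simp
    have h2 : r + (k+1) • t = r + (k+1 : ℝ) * t := by
      push_cast [nsmul_eq_mul]
      ring
    rw [h2]
    gcongr ?_ * _
    push_cast
    rw [abs_mul, abs_pow]
    simp
  calc |f r| = |((-1 : ℤ) ^ (m - 0) * (m.choose 0 : ℤ)) • f (r + (0:ℕ) • t)| := habs0.symm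
    _ = |(fwdDiff t)^[m] f r - S| := by rw [hc0]
    _ ≤ |(fwdDiff t)^[m] f r| + |S| := abs_sub _ _
    _ ≤ _ := by gcongr

lemma key_lemma (m : ℕ) (hm : 2 ≤ m) (s : ℝ) (hs : 0 < s) (h : ℝ → ℝ)
    (hh : ContDiff ℝ (m : ℕ∞) h) (Mh Mm : ℝ)
    (hbdd : ∀ x, |h x| ≤ Mh) (hbddm : ∀ x, |iteratedDeriv m h x| ≤ Mm) :
    ∃ c : ℝ, 0 < c ∧ ∀ r : ℝ,
      |h r| ^ (s + 1/(m:ℝ)) ≤ c * ∫ ξ in Set.Icc r (r+2), |h ξ| ^ s := by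
  have hm0 : (0:ℝ) < m := by
    have : (0:ℕ) < m := by omega
    exact_mod_cast this
  set Mh' : ℝ := max Mh 1 with hMh'
  have hMh'1 : (1:ℝ) ≤ Mh' := le_max_right _ _
  have hMh'0 : (0:ℝ) < Mh' := lt_of_lt_of_le one_pos hMh'1
  have hMm0 : 0 ≤ Mm := le_trans (abs_nonneg _) (hbddm 0)
  set Mm' : ℝ := Mm + 1 with hMm'
  have hMm'0 : (0:ℝ) < Mm' := by positivity
  set c₀ : ℝ := min ((2/(m:ℝ)) * (Mh' ^ (1/(m:ℝ)))⁻¹) (((2*Mm') ^ (1/(m:ℝ)))⁻¹) with hc₀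
  have hc₀pos : 0 < c₀ := by
    apply lt_min
    · positivity
    · positivity
  refine ⟨(2:ℝ) ^ s * ((2:ℝ)^m) ^ s * m / c₀, by positivity, fun r => ?_⟩
  -- continuity and integrability facts
  have hcont : Continuous fun ξ : ℝ => |h ξ| ^ s := by
    rw [continuous_iff_continuousAt]
    intro x
    exact (Real.continuousAt_rpow_const _ _ (Or.inr hs.le)).comp
      ((hh.continuous.abs).continuousAt)
  have hintOn : IntegrableOn (fun ξ => |h ξ| ^ s) (Set.Icc r (r+2)) volume :=
    hcont.integrableOn_Icc
  have hInonneg : 0 ≤ ∫ ξ in Set.Icc r (r+2), |h ξ| ^ s :=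
    setIntegral_nonneg measurableSet_Icc fun x _ => Real.rpow_nonneg (abs_nonneg _) s
  set I : ℝ := ∫ ξ in Set.Icc r (r+2), |h ξ| ^ s with hI
  set a : ℝ := |h r| with ha
  have ha0 : 0 ≤ a := abs_nonneg _
  rcases eq_or_lt_of_le ha0 with hzero | hapos
  · rw [← hzero, Real.zero_rpow (by positivity)]
    positivity
  -- main case : 0 < a
  have haMh' : a ≤ Mh' := le_trans (hbdd r) (le_max_left _ _)
  set δ : ℝ := min (2/(m:ℝ)) ((a/(2*Mm')) ^ (1/(m:ℝ))) with hδ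
  have hδpos : 0 < δ := by
    apply lt_min
    · positivity
    · positivity
  have hδle : δ ≤ 2/(m:ℝ) := min_le_left _ _
  -- (P1) remainder bound
  have hδm : δ ^ m ≤ a / (2*Mm') := by
    have h1 : δ ^ m ≤ ((a/(2*Mm')) ^ (1/(m:ℝ))) ^ m :=
      pow_le_pow_left₀ hδpos.le (min_le_right _ _) m
    have h2 : ((a/(2*Mm')) ^ (1/(m:ℝ))) ^ m = a / (2*Mm') := by
      rw [← Real.rpow_natCast ((a/(2*Mm')) ^ (1/(m:ℝ))) m, ← Real.rpow_mul (by positivity)]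
      rw [one_div, inv_mul_cancel₀ (ne_of_gt hm0), Real.rpow_one]
    rw [h2] at h1
    exact h1
  have hP1 : Mm * δ ^ m ≤ a / 2 := by
    have : Mm * δ ^ m ≤ Mm' * (a / (2*Mm')) := by
      apply mul_le_mul (by rw [hMm']; linarith) hδm (by positivity) hMm'0.le
    calc Mm * δ ^ m ≤ Mm' * (a / (2*Mm')) := this
      _ = a / 2 := by field_simp
  -- (P2) lower bound on δ
  have hP2 : c₀ * a ^ (1/(m:ℝ)) ≤ δ := by
    apply le_min
    · have h1 : a ^ (1/(m:ℝ)) ≤ Mh' ^ (1/(m:ℝ)) :=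
        Real.rpow_le_rpow ha0 haMh' (by positivity)
      calc c₀ * a ^ (1/(m:ℝ)) ≤ (2/(m:ℝ)) * (Mh' ^ (1/(m:ℝ)))⁻¹ * Mh' ^ (1/(m:ℝ)) := by
            apply mul_le_mul (min_le_left _ _) h1 (by positivity) (by positivity)
        _ = 2/(m:ℝ) := by
            rw [mul_assoc, inv_mul_cancel₀ (by positivity)]; ring
    · have h2 : (a/(2*Mm')) ^ (1/(m:ℝ)) = a ^ (1/(m:ℝ)) / (2*Mm') ^ (1/(m:ℝ)) :=
        Real.div_rpow ha0 (by positivity) _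
      rw [h2]
      calc c₀ * a ^ (1/(m:ℝ)) ≤ ((2*Mm') ^ (1/(m:ℝ)))⁻¹ * a ^ (1/(m:ℝ)) := by
            apply mul_le_mul_of_nonneg_right (min_le_right _ _) (by positivity)
        _ = a ^ (1/(m:ℝ)) / (2*Mm') ^ (1/(m:ℝ)) := by ring
  -- pointwise inequality on [0, δ]
  have hpt : ∀ t ∈ Set.Icc (0:ℝ) δ,
      (a/2) ^ s ≤ ((2:ℝ)^m) ^ s * ∑ k ∈ Finset.range m, |h (r + (k+1) * t)| ^ s := by
    rintro t ⟨ht0, htδ⟩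
    have hstep1 : a ≤ Mm * t ^ m
        + ∑ k ∈ Finset.range m, (m.choose (k+1) : ℝ) * |h (r + (k+1) * t)| := by
      have h1 := abs_le_fwd m h t r
      have h2 := fwdDiff_iter_abs_le t ht0 m h Mm hh hbddm r
      calc a ≤ |(fwdDiff t)^[m] h r|
            + ∑ k ∈ Finset.range m, (m.choose (k+1) : ℝ) * |h (r + (k+1) * t)| := h1
        _ ≤ _ := by gcongr
    have hstep2 : Mm * t ^ m ≤ a / 2 := by
      calc Mm * t ^ m ≤ Mm * δ ^ m := by
            apply mul_le_mul_of_nonneg_left (pow_le_pow_left₀ ht0 htδ m) hMm0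
        _ ≤ a / 2 := hP1
    have hstep3 : a / 2 ≤ ∑ k ∈ Finset.range m, (m.choose (k+1) : ℝ) * |h (r + (k+1) * t)| := by
      linarith
    -- pick the maximal term
    obtain ⟨k₀, hk₀mem, hk₀⟩ := Finset.exists_max_image (Finset.range m)
      (fun k => |h (r + (k+1) * t)|) ⟨0, Finset.mem_range.mpr (by omega)⟩
    have hsumchoose : (∑ k ∈ Finset.range m, (m.choose (k+1) : ℝ)) ≤ 2 ^ m := by
      have h1 : ∑ k ∈ Finset.range m, m.choose (k+1) ≤ 2 ^ m := by
        have h2 := Nat.sum_range_choose m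
        have h3 := Finset.sum_range_succ' (fun i => m.choose i) m
        omega
      calc (∑ k ∈ Finset.range m, (m.choose (k+1) : ℝ))
          = ((∑ k ∈ Finset.range m, m.choose (k+1) : ℕ) : ℝ) := by push_cast; rfl
        _ ≤ ((2^m : ℕ) : ℝ) := by exact_mod_cast h1
        _ = 2 ^ m := by push_cast; rfl
    have hstep4 : a / 2 ≤ (2:ℝ)^m * |h (r + (k₀+1) * t)| := by
      calc a / 2 ≤ ∑ k ∈ Finset.range m, (m.choose (k+1) : ℝ) * |h (r + (k+1) * t)| := hstep3
        _ ≤ ∑ k ∈ Finset.range m, (m.choose (k+1) : ℝ) * |h (r + (k₀+1) * t)| := by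
            apply Finset.sum_le_sum
            intro k hk
            exact mul_le_mul_of_nonneg_left (hk₀ k hk) (by positivity)
        _ = (∑ k ∈ Finset.range m, (m.choose (k+1) : ℝ)) * |h (r + (k₀+1) * t)| :=
            (Finset.sum_mul _ _ _).symm
        _ ≤ (2:ℝ)^m * |h (r + (k₀+1) * t)| :=
            mul_le_mul_of_nonneg_right hsumchoose (abs_nonneg _)
    have hstep5 : (a/2) ^ s ≤ ((2:ℝ)^m) ^ s * |h (r + (k₀+1) * t)| ^ s := by
      calc (a/2) ^ s ≤ ((2:ℝ)^m * |h (r + (k₀+1) * t)|) ^ s :=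
            Real.rpow_le_rpow (by positivity) hstep4 hs.le
        _ = ((2:ℝ)^m) ^ s * |h (r + (k₀+1) * t)| ^ s :=
            Real.mul_rpow (by positivity) (abs_nonneg _)
    calc (a/2) ^ s ≤ ((2:ℝ)^m) ^ s * |h (r + (k₀+1) * t)| ^ s := hstep5
      _ ≤ ((2:ℝ)^m) ^ s * ∑ k ∈ Finset.range m, |h (r + (k+1) * t)| ^ s := by
          apply mul_le_mul_of_nonneg_left _ (by positivity)
          exact Finset.single_le_sum (f := fun k : ℕ => |h (r + ((k:ℝ)+1) * t)| ^ s)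
            (fun k _ => Real.rpow_nonneg (abs_nonneg _) s) hk₀mem
  -- integrate the pointwise inequality over [0, δ]
  have hGcont : ∀ k : ℕ, Continuous fun t : ℝ => |h (r + (k+1) * t)| ^ s := by
    intro k
    exact hcont.comp (continuous_const.add (continuous_const.mul continuous_id))
  have hmono : δ * (a/2) ^ s
      ≤ ∫ t in (0:ℝ)..δ, ((2:ℝ)^m) ^ s * ∑ k ∈ Finset.range m, |h (r + (k+1) * t)| ^ s := by
    have h1 := intervalIntegral.integral_mono_on (μ := volume) hδpos.le
      (intervalIntegrable_const (c := (a/2) ^ s))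
      (Continuous.intervalIntegrable
        (continuous_const.mul (continuous_finset_sum _ fun k _ => hGcont k)) 0 δ) hpt
    simpa using h1
  have hsplit : (∫ t in (0:ℝ)..δ, ((2:ℝ)^m) ^ s * ∑ k ∈ Finset.range m, |h (r + (k+1) * t)| ^ s)
      = ((2:ℝ)^m) ^ s * ∑ k ∈ Finset.range m, ∫ t in (0:ℝ)..δ, |h (r + (k+1) * t)| ^ s := by
    rw [intervalIntegral.integral_const_mul]
    congr 1
    exact intervalIntegral.integral_finset_sum
      (fun k _ => Continuous.intervalIntegrable (hGcont k) 0 δ)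
  have hJk : ∀ k ∈ Finset.range m, (∫ t in (0:ℝ)..δ, |h (r + (k+1) * t)| ^ s) ≤ I := by
    intro k hk
    have hk1 : (0:ℝ) < (k:ℝ) + 1 := by positivity
    have hend : r + ((k:ℝ)+1) * δ ≤ r + 2 := by
      have hkm : (k:ℝ) + 1 ≤ m := by
        have : k + 1 ≤ m := Finset.mem_range.mp hk
        exact_mod_cast this
      have : ((k:ℝ)+1) * δ ≤ (m:ℝ) * (2/(m:ℝ)) :=
        mul_le_mul hkm hδle hδpos.le hm0.le
      have h2m : (m:ℝ) * (2/(m:ℝ)) = 2 := by field_simp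
      linarith [this, h2m ▸ this]
    have hcomp1 : (∫ t in (0:ℝ)..δ, |h (r + ((k:ℝ)+1) * t)| ^ s)
        = ((k:ℝ)+1)⁻¹ • ∫ u in (((k:ℝ)+1)*0)..(((k:ℝ)+1)*δ), |h (r + u)| ^ s := by
      exact intervalIntegral.integral_comp_mul_left (fun u => |h (r + u)| ^ s) hk1.ne'
    have hcomp2 : (∫ u in (0:ℝ)..(((k:ℝ)+1)*δ), |h (r + u)| ^ s)
        = ∫ ξ in r..(r + ((k:ℝ)+1)*δ), |h ξ| ^ s := by
      have := intervalIntegral.integral_comp_add_left (a := (0:ℝ)) (b := ((k:ℝ)+1)*δ)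
        (fun ξ => |h ξ| ^ s) r
      simpa using this
    have hsub : (∫ ξ in r..(r + ((k:ℝ)+1)*δ), |h ξ| ^ s) ≤ I := by
      rw [intervalIntegral.integral_of_le (by nlinarith)]
      apply setIntegral_mono_set hintOn
      · exact Filter.Eventually.of_forall fun x => Real.rpow_nonneg (abs_nonneg _) s
      · exact HasSubset.Subset.eventuallyLE
          ((Set.Ioc_subset_Icc_self).trans (Set.Icc_subset_Icc_right hend))
    have hnn : 0 ≤ ∫ ξ in r..(r + ((k:ℝ)+1)*δ), |h ξ| ^ s := by
      rw [intervalIntegral.integral_of_le (by nlinarith)]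
      exact setIntegral_nonneg measurableSet_Ioc fun x _ => Real.rpow_nonneg (abs_nonneg _) s
    calc (∫ t in (0:ℝ)..δ, |h (r + ((k:ℝ)+1) * t)| ^ s)
        = ((k:ℝ)+1)⁻¹ • ∫ u in (0:ℝ)..(((k:ℝ)+1)*δ), |h (r + u)| ^ s := by
          rw [hcomp1]; norm_num
      _ = ((k:ℝ)+1)⁻¹ * ∫ ξ in r..(r + ((k:ℝ)+1)*δ), |h ξ| ^ s := by
          rw [hcomp2, smul_eq_mul]
      _ ≤ 1 * ∫ ξ in r..(r + ((k:ℝ)+1)*δ), |h ξ| ^ s := by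
          apply mul_le_mul_of_nonneg_right _ hnn
          rw [inv_le_one_iff₀]; right; linarith
      _ = ∫ ξ in r..(r + ((k:ℝ)+1)*δ), |h ξ| ^ s := one_mul _
      _ ≤ I := hsub
  have htotal : δ * (a/2) ^ s ≤ ((2:ℝ)^m) ^ s * ((m:ℝ) * I) := by
    calc δ * (a/2) ^ s
        ≤ ((2:ℝ)^m) ^ s * ∑ k ∈ Finset.range m, ∫ t in (0:ℝ)..δ, |h (r + (k+1) * t)| ^ s := by
          rw [← hsplit]; exact hmono
      _ ≤ ((2:ℝ)^m) ^ s * ∑ k ∈ Finset.range m, I := by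
          apply mul_le_mul_of_nonneg_left (Finset.sum_le_sum hJk) (by positivity)
      _ = ((2:ℝ)^m) ^ s * ((m:ℝ) * I) := by
          rw [Finset.sum_const, Finset.card_range, nsmul_eq_mul]
  -- conclude
  have hfinal : a ^ (s + 1/(m:ℝ)) = (2:ℝ)^s * (a/2) ^ s * a ^ (1/(m:ℝ)) := by
    rw [Real.rpow_add hapos]
    congr 1
    rw [Real.div_rpow ha0 (by norm_num : (0:ℝ) ≤ 2)]
    field_simp
  rw [hfinal]
  have haδ : a ^ (1/(m:ℝ)) ≤ δ / c₀ := by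
    rw [le_div_iff₀ hc₀pos]
    linarith [hP2]
  calc (2:ℝ)^s * (a/2) ^ s * a ^ (1/(m:ℝ))
      ≤ (2:ℝ)^s * (a/2) ^ s * (δ / c₀) := by
        apply mul_le_mul_of_nonneg_left haδ (by positivity)
    _ = ((2:ℝ)^s / c₀) * (δ * (a/2) ^ s) := by ring
    _ ≤ ((2:ℝ)^s / c₀) * (((2:ℝ)^m) ^ s * ((m:ℝ) * I)) := by
        apply mul_le_mul_of_nonneg_left htotal (by positivity)
    _ = (2:ℝ) ^ s * ((2:ℝ)^m) ^ s * m / c₀ * I := by ring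

/-- Pointwise information from local integral bounds: for `m ≥ 2`, `q ≥ 1/m` and
`h ∈ C^m(ℝ)` with bounded sup norm and bounded `m`-th derivative, there is a constant
`L_m` (depending only on `q`, `m` and the bounds) such that
`|h(r)|^q ≤ L_m ∫_{Ω_r} |h(ξ)|^{q - 1/m} dξ` for all `r`, where `Ω_r = [r, r+2]` if
`r ≥ 0` and `Ω_r = [r-2, r]` otherwise. -/
theorem pointwise_from_local_L2 (m : ℕ) (hm : 2 ≤ m) (q : ℝ) (hq : 1 / (m : ℝ) ≤ q)
    (h : ℝ → ℝ) (hh : ContDiff ℝ (m : ℕ∞) h) (Mh Mm : ℝ)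
    (hbdd : ∀ x, |h x| ≤ Mh) (hbddm : ∀ x, |iteratedDeriv m h x| ≤ Mm) :
    ∃ L : ℝ, ∀ r : ℝ,
      |h r| ^ q ≤
        L * ∫ ξ in (if 0 ≤ r then Set.Icc r (r + 2) else Set.Icc (r - 2) r),
          |h ξ| ^ (q - 1 / m) := by
  have hm0 : (0:ℝ) < m := by
    have : (0:ℕ) < m := by omega
    exact_mod_cast this
  have hq0 : 0 < q := lt_of_lt_of_le (by positivity) hq
  set s : ℝ := q - 1/(m:ℝ) with hsdef
  have hs0 : 0 ≤ s := by simp only [hsdef]; linarith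
  rcases eq_or_lt_of_le hs0 with hzero | hspos
  · -- q = 1/m : the integrand is constant 1
    refine ⟨(max Mh 1) ^ q / 2, fun r => ?_⟩
    have hint1 : ∀ ξ : ℝ, |h ξ| ^ (q - 1/(m:ℝ)) = 1 := by
      intro ξ
      rw [← hsdef, ← hzero, Real.rpow_zero]
    have hvol : ∀ A B : ℝ, B - A = 2 →
        (∫ ξ in Set.Icc A B, |h ξ| ^ (q - 1/(m:ℝ))) = 2 := by
      intro A B hAB
      rw [show (fun ξ => |h ξ| ^ (q - 1/(m:ℝ))) = fun _ => (1:ℝ) from funext hint1]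
      rw [setIntegral_const, Real.volume_real_Icc, smul_eq_mul, mul_one,
        max_eq_left (by linarith)]
      exact hAB
    have hhr : |h r| ^ q ≤ (max Mh 1) ^ q :=
      Real.rpow_le_rpow (abs_nonneg _) ((hbdd r).trans (le_max_left _ _)) hq0.le
    split_ifs with hr
    · rw [hvol r (r+2) (by ring)]; linarith
    · rw [hvol (r-2) r (by ring)]; linarith
  · -- main case
    obtain ⟨c₁, hc₁, H₁⟩ := key_lemma m hm s hspos h hh Mh Mm hbdd hbddm
    have hgsm : ContDiff ℝ (m : ℕ∞) (fun x => h (-x)) := hh.comp contDiff_neg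
    have hgbdd : ∀ x, |h (-x)| ≤ Mh := fun x => hbdd (-x)
    have hgbddm : ∀ x, |iteratedDeriv m (fun y => h (-y)) x| ≤ Mm := by
      intro x
      rw [iteratedDeriv_comp_neg]
      rw [smul_eq_mul, abs_mul, abs_pow, abs_neg, abs_one, one_pow, one_mul]
      exact hbddm (-x)
    obtain ⟨c₂, hc₂, H₂⟩ := key_lemma m hm s hspos (fun x => h (-x)) hgsm Mh Mm hgbdd hgbddm
    refine ⟨max c₁ c₂, fun r => ?_⟩
    have hqs : q = s + 1/(m:ℝ) := by simp only [hsdef]; ring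
    split_ifs with hr
    · have hIpos : 0 ≤ ∫ ξ in Set.Icc r (r+2), |h ξ| ^ s :=
        setIntegral_nonneg measurableSet_Icc fun x _ => Real.rpow_nonneg (abs_nonneg _) s
      calc |h r| ^ q = |h r| ^ (s + 1/(m:ℝ)) := by rw [hqs]
        _ ≤ c₁ * ∫ ξ in Set.Icc r (r+2), |h ξ| ^ s := H₁ r
        _ ≤ (max c₁ c₂) * ∫ ξ in Set.Icc r (r+2), |h ξ| ^ s :=
            mul_le_mul_of_nonneg_right (le_max_left _ _) hIpos
    · -- r < 0 : reflect
      have hchange : (∫ ξ in Set.Icc (-r) (-r+2), |h (-ξ)| ^ s)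
          = ∫ ξ in Set.Icc (r-2) r, |h ξ| ^ s := by
        rw [integral_Icc_eq_integral_Ioc, integral_Icc_eq_integral_Ioc]
        rw [← intervalIntegral.integral_of_le (by linarith : -r ≤ -r+2),
          ← intervalIntegral.integral_of_le (by linarith : r-2 ≤ r)]
        have := intervalIntegral.integral_comp_neg (a := -r) (b := -r+2)
          (f := fun ξ => |h ξ| ^ s)
        rw [this]
        norm_num
        rw [show -2 + r = r - 2 by ring]
      have hIpos : 0 ≤ ∫ ξ in Set.Icc (r-2) r, |h ξ| ^ s :=
        setIntegral_nonneg measurableSet_Icc fun x _ => Real.rpow_nonneg (abs_nonneg _) s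
      have hval : |h r| = |h (-(-r))| := by rw [neg_neg]
      calc |h r| ^ q = |h (-(-r))| ^ (s + 1/(m:ℝ)) := by rw [hqs, ← hval]
        _ ≤ c₂ * ∫ ξ in Set.Icc (-r) (-r+2), |h (-ξ)| ^ s := H₂ (-r)
        _ = c₂ * ∫ ξ in Set.Icc (r-2) r, |h ξ| ^ s := by rw [hchange]
        _ ≤ (max c₁ c₂) * ∫ ξ in Set.Icc (r-2) r, |h ξ| ^ s :=
            mul_le_mul_of_nonneg_right (le_max_right _ _) hIpos
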